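/- If a ∈ R has a Hirano inverse b, then for every n ≥ 1, aⁿ has Hirano inverse bⁿ. -/

import Mathlib

def IsHiranoInverse {R : Type*} [Ring R] (a b : R) : Prop :=
  IsNilpotent (a ^ 2 - a * b) ∧ a * b = b * a ∧ b = b * a * b

lemma nilpotent_pow_sub_pow {R : Type*} [Ring R] {x y : R} (hc : Commute x y)
    (h : IsNilpotent (x - y)) (n : ℕ) : IsNilpotent (x ^ n - y ^ n) := by
  rw [← hc.mul_geom_sum₂ n]
  refine Commute.isNilpotent_mul_right ?_ h
  refine Commute.sum_right _ _ _ fun i _ => ?_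
  exact (((Commute.refl x).sub_left hc.symm).pow_right _).mul_right
    ((hc.sub_left (Commute.refl y)).pow_right _)

theorem stmt16 {R : Type*} [Ring R] (a b : R) (h : IsHiranoInverse a b)
    (n : ℕ) (hn : 1 ≤ n) : IsHiranoInverse (a ^ n) (b ^ n) := by
  obtain ⟨h1, h2, h3⟩ := h
  have hc : Commute a b := h2
  have he : (a * b) * (a * b) = a * b := by
    calc (a * b) * (a * b) = a * (b * a * b) := by noncomm_ring
    _ = a * b := by rw [← h3]
  have hen : (a * b) ^ n = a * b := by
    induction n with
    | zero => omega
    | succ m ih =>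
      rcases Nat.eq_or_lt_of_le (Nat.zero_le m) with hm | hm
      · simp [← hm]
      · rw [pow_succ, ih hm, he]
  have hab : a ^ n * b ^ n = (a * b) ^ n := (hc.mul_pow n).symm
  refine ⟨?_, hc.pow_pow n n, ?_⟩
  · have : (a ^ n) ^ 2 - a ^ n * b ^ n = (a ^ 2) ^ n - (a * b) ^ n := by
      rw [hab, ← pow_mul, ← pow_mul, Nat.mul_comm]
    rw [this]
    exact nilpotent_pow_sub_pow
      (((Commute.refl a).pow_left 2).mul_right (hc.pow_left 2)) h1 n
  · calc b ^ n = (b * a * b) ^ n := by rw [← h3]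
    _ = (b * (a * b)) ^ n := by rw [mul_assoc]
    _ = b ^ n * (a * b) ^ n := (hc.symm.mul_right (Commute.refl b)).mul_pow n
    _ = b ^ n * (a ^ n * b ^ n) := by rw [hab]
    _ = b ^ n * a ^ n * b ^ n := by rw [mul_assoc]
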